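/- Let L be a linear partial differential operator of the form L = Σ_{i=0}^{N_y} Σ_{j=0}^{N_x} ℓ_{ij}(x,y) ∂^{i+j}/(∂y^i ∂x^j) with polynomial variable coefficients ℓ_{ij}. Define the splitting rank of L as the smallest k such that L = Σ_{j=1}^{k} (L_j^y ⊗ L_j^x) for linear ordinary differential operators L_j^y (in y) and L_j^x (in x). Then the splitting rank of L equals the smallest integer k for which the function H(s,x,t,y) = Σ_{i=0}^{N_y} Σ_{j=0}^{N_x} ℓ_{ij}(s,t) y^i x^j can be written as Σ_{j=1}^{k} c_j(t,y) r_j(s,x) for functions c_j and r_j. -/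

import Mathlib

open Polynomial


private lemma coeff_sum_CX {n : ℕ} (a : Fin n → ℝ) (p : ℕ) :
    (∑ q : Fin n, Polynomial.C (a q) * Polynomial.X ^ (q : ℕ)).coeff p =
      if h : p < n then a ⟨p, h⟩ else 0 := by
  rw [Polynomial.finset_sum_coeff]
  simp only [Polynomial.coeff_C_mul, Polynomial.coeff_X_pow, mul_ite, mul_one, mul_zero]
  split
  · next h =>
    rw [Finset.sum_eq_single (⟨p, h⟩ : Fin n)]
    · simp
    · intro b _ hb
      simp only [ite_eq_right_iff]
      intro hpb
      exact absurd (Fin.ext hpb.symm : b = ⟨p, h⟩) hb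
    · simp
  · next h =>
    apply Finset.sum_eq_zero
    intro q _
    simp only [ite_eq_right_iff]
    intro hpq
    exact absurd (hpq ▸ q.isLt) h

private lemma sum_ite_nat {n : ℕ} (f : Fin n → ℝ) (p : ℕ) :
    (∑ q : Fin n, if p = (q : ℕ) then f q else 0) = if h : p < n then f ⟨p, h⟩ else 0 := by
  split
  · next h =>
    rw [Finset.sum_eq_single (⟨p, h⟩ : Fin n)]
    · simp
    · intro b _ hb
      simp only [ite_eq_right_iff]
      intro hpb
      exact absurd (Fin.ext hpb.symm : b = ⟨p, h⟩) hb
    · simp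
  · next h =>
    apply Finset.sum_eq_zero
    intro q _
    simp only [ite_eq_right_iff]
    intro hpq
    exact absurd (hpq ▸ q.isLt) h

private lemma mono_indep1 {n : ℕ} (a : Fin n → ℝ)
    (h : ∀ x : ℝ, ∑ q : Fin n, a q * x ^ (q : ℕ) = 0) : ∀ q, a q = 0 := by
  have hp : (∑ q : Fin n, Polynomial.C (a q) * Polynomial.X ^ (q : ℕ) : Polynomial ℝ) = 0 := by
    refine Polynomial.funext fun x => ?_
    simp only [Polynomial.eval_finset_sum, Polynomial.eval_mul, Polynomial.eval_C,
      Polynomial.eval_pow, Polynomial.eval_X, Polynomial.eval_zero]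
    exact h x
  intro q
  have h2 : (∑ q : Fin n, Polynomial.C (a q) * Polynomial.X ^ (q : ℕ) : Polynomial ℝ).coeff
      (q : ℕ) = 0 := by rw [hp]; simp
  rw [coeff_sum_CX] at h2
  simpa [q.isLt] using h2


private lemma mono_indep2 {n m : ℕ} (v : Fin n × Fin m → ℝ)
    (h : ∀ s x : ℝ, ∑ jq : Fin n × Fin m, v jq * s ^ (jq.2 : ℕ) * x ^ (jq.1 : ℕ) = 0) :
    ∀ jq, v jq = 0 := by
  have key : ∀ (x : ℝ) (q : Fin m), (∑ j : Fin n, v (j, q) * x ^ (j : ℕ)) = 0 := by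
    intro x q
    refine mono_indep1 (fun q => ∑ j : Fin n, v (j, q) * x ^ (j : ℕ)) (fun s => ?_) q
    have := h s x
    rw [Fintype.sum_prod_type] at this
    rw [← this, Finset.sum_comm]
    congr 1; ext q'
    rw [Finset.sum_mul]
    congr 1; ext j
    ring
  intro ⟨j, q⟩
  exact mono_indep1 (fun j => v (j, q)) (fun x => key x q) j

private lemma vand_delta (n : ℕ) : ∃ B : Matrix (Fin n) (Fin n) ℝ,
    ∀ p p' : Fin n, (∑ α : Fin n, B p α * (α : ℝ) ^ (p' : ℕ)) = if p = p' then 1 else 0 := by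
  set V := Matrix.vandermonde (fun α : Fin n => (α : ℝ)) with hV
  have hdet : IsUnit V.det := by
    rw [hV, Matrix.det_vandermonde]
    refine (Finset.prod_ne_zero_iff.2 fun i _ => Finset.prod_ne_zero_iff.2 fun j hj => ?_).isUnit
    have hij : (i : ℕ) < (j : ℕ) := (Finset.mem_Ioi.1 hj : i < j)
    have : (i : ℝ) < (j : ℝ) := by exact_mod_cast hij
    exact sub_ne_zero.2 (ne_of_gt this)
  refine ⟨V⁻¹, fun p p' => ?_⟩
  have h1 := Matrix.nonsing_inv_mul V hdet
  have h2 := congrFun (congrFun h1 p) p'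
  simpa [Matrix.mul_apply, hV, Matrix.vandermonde, Matrix.one_apply] using h2

set_option maxHeartbeats 1000000

private lemma core (Ny Nx : ℕ) (ℓ : ℕ → ℕ → Polynomial (Polynomial ℝ))
    (hsupp : ∀ i j, (Ny < i ∨ Nx < j) → ℓ i j = 0) :
    ∃ d : ℕ,
      (∃ (a b : Fin d → ℕ → Polynomial ℝ), ∀ i j, ℓ i j = ∑ m : Fin d,
          ((a m i).map (Polynomial.C : ℝ →+* Polynomial ℝ)) * Polynomial.C (b m j)) ∧
      ∀ k : ℕ, (∃ (c r : Fin k → ℝ → ℝ → ℝ), ∀ s x t y : ℝ,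
          (∑ i ∈ Finset.range (Ny + 1), ∑ j ∈ Finset.range (Nx + 1),
              Polynomial.eval s (Polynomial.eval (Polynomial.C t) (ℓ i j)) * y ^ i * x ^ j) =
            ∑ m : Fin k, c m t y * r m s x) → d ≤ k := by
  classical
  set P : ℕ := 1 + (Finset.range (Ny+1) ×ˢ Finset.range (Nx+1)).sup
      (fun ij => (ℓ ij.1 ij.2).natDegree) with hPdef
  set Q : ℕ := 1 + (Finset.range (Ny+1) ×ˢ Finset.range (Nx+1)).sup
      (fun ij => (ℓ ij.1 ij.2).support.sup fun p => ((ℓ ij.1 ij.2).coeff p).natDegree) with hQdef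
  have hP : ∀ i j, i ≤ Ny → j ≤ Nx → (ℓ i j).natDegree < P := by
    intro i j hi hj
    have : (ℓ i j).natDegree ≤ (Finset.range (Ny+1) ×ˢ Finset.range (Nx+1)).sup
        (fun ij => (ℓ ij.1 ij.2).natDegree) :=
      Finset.le_sup (f := fun ij => (ℓ ij.1 ij.2).natDegree) (b := (i, j)) (Finset.mem_product.2 ⟨Finset.mem_range.2 (Nat.lt_succ_of_le hi),
        Finset.mem_range.2 (Nat.lt_succ_of_le hj)⟩)
    omega
  have hQ : ∀ i j p, i ≤ Ny → j ≤ Nx → ((ℓ i j).coeff p).natDegree < Q := by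
    intro i j p hi hj
    have h1 : ((ℓ i j).support.sup fun p => ((ℓ i j).coeff p).natDegree) ≤
        (Finset.range (Ny+1) ×ˢ Finset.range (Nx+1)).sup
        (fun ij => (ℓ ij.1 ij.2).support.sup fun p => ((ℓ ij.1 ij.2).coeff p).natDegree) :=
      Finset.le_sup (f := fun ij => (ℓ ij.1 ij.2).support.sup fun p =>
          ((ℓ ij.1 ij.2).coeff p).natDegree) (b := (i, j))
        (Finset.mem_product.2 ⟨Finset.mem_range.2 (Nat.lt_succ_of_le hi),
          Finset.mem_range.2 (Nat.lt_succ_of_le hj)⟩)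
    by_cases hp : p ∈ (ℓ i j).support
    · have h2 : ((ℓ i j).coeff p).natDegree ≤
          (ℓ i j).support.sup (fun p => ((ℓ i j).coeff p).natDegree) := by
        exact Finset.le_sup (f := fun p => ((ℓ i j).coeff p).natDegree) hp
      omega
    · rw [Polynomial.notMem_support_iff.1 hp]
      simp only [Polynomial.natDegree_zero]
      omega
  set M : Fin (Ny+1) × Fin P → (Fin (Nx+1) × Fin Q) → ℝ :=
    fun ip jq => ((ℓ (ip.1 : ℕ) (jq.1 : ℕ)).coeff (ip.2 : ℕ)).coeff (jq.2 : ℕ) with hMdef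
  set Φ : ((Fin (Nx+1) × Fin Q) → ℝ) →ₗ[ℝ] (ℝ → ℝ → ℝ) :=
    { toFun := fun v => fun s x => ∑ jq : Fin (Nx+1) × Fin Q,
        v jq * s ^ (jq.2 : ℕ) * x ^ (jq.1 : ℕ)
      map_add' := by
        intro v w
        funext s x
        simp [add_mul, Finset.sum_add_distrib]
      map_smul' := by
        intro t v
        funext s x
        simp [Finset.mul_sum, mul_assoc] } with hΦdef
  have hΦinj : Function.Injective Φ := by
    rw [← LinearMap.ker_eq_bot]
    rw [LinearMap.ker_eq_bot']
    intro v hv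
    funext jq
    refine mono_indep2 v (fun s x => ?_) jq
    have := congrFun (congrFun hv s) x
    simpa [hΦdef] using this
  set R : Submodule ℝ ((Fin (Nx+1) × Fin Q) → ℝ) := Submodule.span ℝ (Set.range M) with hRdef
  haveI : FiniteDimensional ℝ R := FiniteDimensional.span_of_finite ℝ (Set.finite_range M)
  refine ⟨Module.finrank ℝ R, ?_, ?_⟩
  · -- polynomial splitting with finrank-many terms
    let w := Module.finBasis ℝ R
    have hrow : ∀ ip, M ip ∈ R := fun ip => Submodule.subset_span (Set.mem_range_self ip)
    set u : Fin (Ny+1) × Fin P → Fin (Module.finrank ℝ R) → ℝ :=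
      fun ip m => w.repr ⟨M ip, hrow ip⟩ m with hudef
    have hMsum : ∀ ip jq, M ip jq =
        ∑ m, u ip m * (w m : (Fin (Nx+1) × Fin Q) → ℝ) jq := by
      intro ip jq
      have h1 : (⟨M ip, hrow ip⟩ : R) = ∑ m, u ip m • w m := (w.sum_repr ⟨M ip, hrow ip⟩).symm
      have h2 := congrArg (fun z : R => (z : (Fin (Nx+1) × Fin Q) → ℝ) jq) h1
      simpa [AddSubmonoidClass.coe_finset_sum, Finset.sum_apply, Pi.smul_apply,
        smul_eq_mul] using h2
    refine ⟨fun m i => if h : i < Ny + 1 then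
        ∑ p : Fin P, Polynomial.C (u (⟨i, h⟩, p) m) * Polynomial.X ^ (p : ℕ) else 0,
      fun m j => if h : j < Nx + 1 then
        ∑ q : Fin Q, Polynomial.C ((w m : (Fin (Nx+1) × Fin Q) → ℝ) (⟨j, h⟩, q)) *
          Polynomial.X ^ (q : ℕ) else 0, ?_⟩
    intro i j
    by_cases hij : Ny < i ∨ Nx < j
    · rw [hsupp i j hij]
      refine (Finset.sum_eq_zero fun m _ => ?_).symm
      dsimp only
      rcases hij with hi | hj
      · rw [dif_neg (show ¬ i < Ny + 1 by omega)]; simp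
      · rw [dif_neg (show ¬ j < Nx + 1 by omega)]; simp
    · push_neg at hij
      obtain ⟨hi, hj⟩ := hij
      have hi' : i < Ny + 1 := by omega
      have hj' : j < Nx + 1 := by omega
      apply Polynomial.ext; intro p
      apply Polynomial.ext; intro q
      simp only [Polynomial.finset_sum_coeff, Polynomial.coeff_mul_C, Polynomial.coeff_map,
        Polynomial.coeff_C_mul, Polynomial.coeff_X_pow, mul_ite, mul_one, mul_zero,
        dif_pos hi', dif_pos hj', sum_ite_nat]
      by_cases hp : p < P
      · by_cases hq : q < Q
        · simp only [dif_pos hp, dif_pos hq]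
          have h3 := hMsum (⟨i, hi'⟩, ⟨p, hp⟩) (⟨j, hj'⟩, ⟨q, hq⟩)
          rw [hMdef] at h3
          exact h3
        · rw [Polynomial.coeff_eq_zero_of_natDegree_lt
            (lt_of_lt_of_le (hQ i j p (by omega) (by omega)) (by omega))]
          simp [dif_neg hq]
      · rw [Polynomial.coeff_eq_zero_of_natDegree_lt
          (lt_of_lt_of_le (hP i j (by omega) (by omega)) (by omega))]
        simp [dif_neg hp]
  · -- rank bound
    rintro k ⟨c, r, hcr⟩
    set W : Submodule ℝ (ℝ → ℝ → ℝ) := Submodule.span ℝ (Set.range r) with hWdef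
    haveI : FiniteDimensional ℝ W := FiniteDimensional.span_of_finite ℝ (Set.finite_range r)
    have hWk : Module.finrank ℝ W ≤ k := by
      have := finrank_range_le_card (R := ℝ) r; rw [Fintype.card_fin] at this; exact this
    obtain ⟨Bp, hBp⟩ := vand_delta P
    obtain ⟨By, hBy⟩ := vand_delta (Ny + 1)
    have hexp : ∀ s x t y : ℝ,
        (∑ i ∈ Finset.range (Ny + 1), ∑ j ∈ Finset.range (Nx + 1),
            Polynomial.eval s (Polynomial.eval (Polynomial.C t) (ℓ i j)) * y ^ i * x ^ j) =
        ∑ ip : Fin (Ny+1) × Fin P, (t ^ (ip.2 : ℕ) * y ^ (ip.1 : ℕ)) * Φ (M ip) s x := by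
      intro s x t y
      have heval : ∀ i ∈ Finset.range (Ny + 1), ∀ j ∈ Finset.range (Nx + 1),
          Polynomial.eval s (Polynomial.eval (Polynomial.C t) (ℓ i j)) * y ^ i * x ^ j =
          ∑ p ∈ Finset.range P, ∑ q ∈ Finset.range Q,
            ((ℓ i j).coeff p).coeff q * s ^ q * t ^ p * y ^ i * x ^ j := by
        intro i hi j hj
        have hi' : i ≤ Ny := by have := Finset.mem_range.1 hi; omega
        have hj' : j ≤ Nx := by have := Finset.mem_range.1 hj; omega
        rw [Polynomial.eval_eq_sum_range' (hP i j hi' hj') (Polynomial.C t),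
          Polynomial.eval_finset_sum]
        simp only [Polynomial.eval_mul, Polynomial.eval_pow, Polynomial.eval_C]
        rw [Finset.sum_congr rfl (fun p (_ : p ∈ Finset.range P) => by
          rw [Polynomial.eval_eq_sum_range' (hQ i j p hi' hj') s])]
        simp only [Finset.sum_mul]
      rw [Finset.sum_congr rfl (fun i hi => Finset.sum_congr rfl (fun j hj => heval i hi j hj))]
      rw [Finset.sum_congr rfl (fun i (_ : i ∈ Finset.range (Ny + 1)) =>
        Finset.sum_comm (s := Finset.range (Nx + 1)) (t := Finset.range P)
          (f := fun j p => ∑ q ∈ Finset.range Q,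
            ((ℓ i j).coeff p).coeff q * s ^ q * t ^ p * y ^ i * x ^ j))]
      simp only [hΦdef, LinearMap.coe_mk, AddHom.coe_mk, hMdef, Fintype.sum_prod_type,
        Finset.mul_sum]
      have conv4 : ∀ (F : ℕ → ℕ → ℕ → ℕ → ℝ),
          (∑ i : Fin (Ny+1), ∑ p : Fin P, ∑ j : Fin (Nx+1), ∑ q : Fin Q,
            F (i : ℕ) (p : ℕ) (j : ℕ) (q : ℕ)) =
          ∑ i ∈ Finset.range (Ny+1), ∑ p ∈ Finset.range P, ∑ j ∈ Finset.range (Nx+1),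
            ∑ q ∈ Finset.range Q, F i p j q := by
        intro F
        rw [Fin.sum_univ_eq_sum_range
          (fun i => ∑ p : Fin P, ∑ j : Fin (Nx+1), ∑ q : Fin Q, F i (p:ℕ) (j:ℕ) (q:ℕ))]
        refine Finset.sum_congr rfl fun i _ => ?_
        rw [Fin.sum_univ_eq_sum_range
          (fun p => ∑ j : Fin (Nx+1), ∑ q : Fin Q, F i p (j:ℕ) (q:ℕ))]
        refine Finset.sum_congr rfl fun p _ => ?_
        rw [Fin.sum_univ_eq_sum_range (fun j => ∑ q : Fin Q, F i p j (q:ℕ))]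
        refine Finset.sum_congr rfl fun j _ => ?_
        exact Fin.sum_univ_eq_sum_range (fun q => F i p j q) Q
      have key := conv4 (fun i p j q =>
        t ^ p * y ^ i * (((ℓ i j).coeff p).coeff q * s ^ q * x ^ j))
      beta_reduce at key
      rw [key]
      refine Finset.sum_congr rfl fun i _ => Finset.sum_congr rfl fun p _ =>
        Finset.sum_congr rfl fun j _ => Finset.sum_congr rfl fun q _ => by ring
    have hmem : ∀ ip : Fin (Ny+1) × Fin P, Φ (M ip) ∈ W := by
      rintro ⟨i0, p0⟩
      have hrep : Φ (M (i0, p0)) = ∑ α : Fin P, ∑ β : Fin (Ny+1),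
          (Bp p0 α * By i0 β) •
            (fun s x => ∑ m : Fin k, c m (α : ℝ) (β : ℝ) * r m s x : ℝ → ℝ → ℝ) := by
        funext s x
        have hrhs : ∀ (α : Fin P) (β : Fin (Ny+1)),
            (∑ m : Fin k, c m (α : ℝ) (β : ℝ) * r m s x) =
            ∑ ip : Fin (Ny+1) × Fin P,
              ((α : ℝ) ^ (ip.2 : ℕ) * (β : ℝ) ^ (ip.1 : ℕ)) * Φ (M ip) s x :=
          fun α β => (hcr s x (α : ℝ) (β : ℝ)).symm.trans (hexp s x (α : ℝ) (β : ℝ))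
        have key : ∀ ip : Fin (Ny+1) × Fin P,
            (∑ α : Fin P, ∑ β : Fin (Ny+1), (Bp p0 α * By i0 β) *
              (((α : ℝ) ^ (ip.2 : ℕ) * (β : ℝ) ^ (ip.1 : ℕ)) * Φ (M ip) s x)) =
            (if p0 = ip.2 then (1:ℝ) else 0) * (if i0 = ip.1 then (1:ℝ) else 0) *
              Φ (M ip) s x := by
          intro ip
          rw [← hBp p0 ip.2, ← hBy i0 ip.1, Finset.sum_mul_sum, Finset.sum_mul]
          refine Finset.sum_congr rfl fun α _ => ?_
          rw [Finset.sum_mul]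
          exact Finset.sum_congr rfl fun β _ => by ring
        have collapse : (∑ ip : Fin (Ny+1) × Fin P,
            (if p0 = ip.2 then (1:ℝ) else 0) * (if i0 = ip.1 then (1:ℝ) else 0) *
              Φ (M ip) s x) = Φ (M (i0, p0)) s x := by
          rw [Fintype.sum_prod_type]
          simp [Finset.sum_ite_eq, ite_mul, one_mul, zero_mul]
        calc Φ (M (i0, p0)) s x
            = ∑ ip : Fin (Ny+1) × Fin P, ∑ α : Fin P, ∑ β : Fin (Ny+1),
                (Bp p0 α * By i0 β) *
                  (((α : ℝ) ^ (ip.2 : ℕ) * (β : ℝ) ^ (ip.1 : ℕ)) * Φ (M ip) s x) := by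
              rw [Finset.sum_congr rfl fun ip _ => key ip]
              rw [collapse]
          _ = ∑ α : Fin P, ∑ β : Fin (Ny+1), ∑ ip : Fin (Ny+1) × Fin P,
                (Bp p0 α * By i0 β) *
                  (((α : ℝ) ^ (ip.2 : ℕ) * (β : ℝ) ^ (ip.1 : ℕ)) * Φ (M ip) s x) := by
              rw [Finset.sum_comm]
              exact Finset.sum_congr rfl fun α _ => Finset.sum_comm
          _ = (∑ α : Fin P, ∑ β : Fin (Ny+1), (Bp p0 α * By i0 β) •
                (fun s x => ∑ m : Fin k, c m (α : ℝ) (β : ℝ) * r m s x : ℝ → ℝ → ℝ)) s x := by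
              simp only [Finset.sum_apply, Pi.smul_apply, smul_eq_mul]
              refine Finset.sum_congr rfl fun α _ => Finset.sum_congr rfl fun β _ => ?_
              rw [hrhs α β, Finset.mul_sum]
      rw [hrep]
      refine Submodule.sum_mem _ fun α _ => Submodule.sum_mem _ fun β _ =>
        Submodule.smul_mem _ _ ?_
      have hfun : (fun s x => ∑ m : Fin k, c m (α : ℝ) (β : ℝ) * r m s x : ℝ → ℝ → ℝ) =
          ∑ m : Fin k, (c m (α : ℝ) (β : ℝ)) • r m := by
        funext s x
        simp [Finset.sum_apply, Pi.smul_apply, smul_eq_mul]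
      rw [hfun]
      exact Submodule.sum_mem _ fun m _ =>
        Submodule.smul_mem _ _ (Submodule.subset_span (Set.mem_range_self m))
    have hle : Submodule.map Φ R ≤ W := by
      rw [hRdef, Submodule.map_span]
      refine Submodule.span_le.2 ?_
      rintro _ ⟨_, ⟨ip, rfl⟩, rfl⟩
      exact hmem ip
    calc Module.finrank ℝ R = Module.finrank ℝ (Submodule.map Φ R) :=
          (Submodule.equivMapOfInjective Φ hΦinj R).finrank_eq
      _ ≤ Module.finrank ℝ W := Submodule.finrank_mono hle
      _ ≤ k := hWk


private lemma split_to_fun (Ny Nx k : ℕ) (ℓ : ℕ → ℕ → Polynomial (Polynomial ℝ))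
    (a b : Fin k → ℕ → Polynomial ℝ)
    (hab : ∀ i j, ℓ i j = ∑ m : Fin k,
      ((a m i).map (Polynomial.C : ℝ →+* Polynomial ℝ)) * Polynomial.C (b m j)) :
    ∃ (c r : Fin k → ℝ → ℝ → ℝ), ∀ s x t y : ℝ,
      (∑ i ∈ Finset.range (Ny + 1), ∑ j ∈ Finset.range (Nx + 1),
          Polynomial.eval s (Polynomial.eval (Polynomial.C t) (ℓ i j)) * y ^ i * x ^ j) =
        ∑ m : Fin k, c m t y * r m s x := by
  refine ⟨fun m t y => ∑ i ∈ Finset.range (Ny + 1), (a m i).eval t * y ^ i,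
    fun m s x => ∑ j ∈ Finset.range (Nx + 1), (b m j).eval s * x ^ j, ?_⟩
  intro s x t y
  have heval : ∀ i j, Polynomial.eval s (Polynomial.eval (Polynomial.C t) (ℓ i j)) =
      ∑ m : Fin k, (a m i).eval t * (b m j).eval s := by
    intro i j
    rw [hab i j, Polynomial.eval_finset_sum, Polynomial.eval_finset_sum]
    refine Finset.sum_congr rfl fun m _ => ?_
    rw [Polynomial.eval_mul, Polynomial.eval_C, Polynomial.eval_map,
      Polynomial.eval₂_at_apply, Polynomial.eval_mul, Polynomial.eval_C]
  rw [Finset.sum_congr rfl (fun i (_ : i ∈ Finset.range (Ny + 1)) =>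
    Finset.sum_congr rfl (fun j (_ : j ∈ Finset.range (Nx + 1)) => by rw [heval i j]))]
  simp only [Finset.sum_mul]
  calc ∑ i ∈ Finset.range (Ny + 1), ∑ j ∈ Finset.range (Nx + 1), ∑ m : Fin k,
        (a m i).eval t * (b m j).eval s * y ^ i * x ^ j
      = ∑ m : Fin k, ∑ i ∈ Finset.range (Ny + 1), ∑ j ∈ Finset.range (Nx + 1),
        ((a m i).eval t * y ^ i) * ((b m j).eval s * x ^ j) := by
        rw [Finset.sum_congr rfl (fun i (_ : i ∈ Finset.range (Ny + 1)) =>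
          Finset.sum_comm (s := Finset.range (Nx + 1)) (t := (Finset.univ : Finset (Fin k)))
            (f := fun j m => (a m i).eval t * (b m j).eval s * y ^ i * x ^ j))]
        rw [Finset.sum_comm]
        exact Finset.sum_congr rfl fun m _ => Finset.sum_congr rfl fun i _ =>
          Finset.sum_congr rfl fun j _ => by ring
    _ = ∑ m : Fin k, ∑ i ∈ Finset.range (Ny + 1), ((a m i).eval t * y ^ i *
          (∑ j ∈ Finset.range (Nx + 1), (b m j).eval s * x ^ j)) :=
        Finset.sum_congr rfl fun m _ => Finset.sum_congr rfl fun i _ =>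
          (Finset.mul_sum _ _ _).symm


/-- Proposition on the splitting rank of a linear PDO
`L = Σ_{i ≤ Ny} Σ_{j ≤ Nx} ℓ_{ij}(x,y) ∂^{i+j}/(∂y^i ∂x^j)` with polynomial variable
coefficients. A bivariate polynomial `ℓ_{ij}(x,y)` is encoded as an element of
`(ℝ[x])[y]`; a linear ODO in `y` is encoded by its family of coefficients
`a i : ℝ[y]` (of `∂^i/∂y^i`), and similarly in `x`. The splitting rank of `L`, i.e. the
least `k` with `L = Σ_{m=1}^k (L_m^y ⊗ L_m^x)` (equivalently
`ℓ_{ij}(x,y) = Σ_m a_{m,i}(y) b_{m,j}(x)`), equals the least `k` for which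
`H(s,x,t,y) = Σ_{i ≤ Ny} Σ_{j ≤ Nx} ℓ_{ij}(s,t) y^i x^j` can be written as
`Σ_{m=1}^k c_m(t,y) r_m(s,x)` for bivariate functions `c_m, r_m`. -/
theorem splitting_rank_eq_rank_of_H (Ny Nx : ℕ)
    (ℓ : ℕ → ℕ → Polynomial (Polynomial ℝ))
    (hsupp : ∀ i j, (Ny < i ∨ Nx < j) → ℓ i j = 0) :
    sInf {k : ℕ | ∃ (a b : Fin k → ℕ → Polynomial ℝ),
        ∀ i j, ℓ i j = ∑ m : Fin k,
          ((a m i).map (Polynomial.C : ℝ →+* Polynomial ℝ)) * Polynomial.C (b m j)} =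
    sInf {k : ℕ | ∃ (c r : Fin k → ℝ → ℝ → ℝ),
        ∀ s x t y : ℝ,
          (∑ i ∈ Finset.range (Ny + 1), ∑ j ∈ Finset.range (Nx + 1),
              Polynomial.eval s (Polynomial.eval (Polynomial.C t) (ℓ i j)) * y ^ i * x ^ j) =
            ∑ m : Fin k, c m t y * r m s x} := by
  obtain ⟨d, hd, hdle⟩ := core Ny Nx ℓ hsupp
  set S1 := {k : ℕ | ∃ (a b : Fin k → ℕ → Polynomial ℝ),
      ∀ i j, ℓ i j = ∑ m : Fin k,
        ((a m i).map (Polynomial.C : ℝ →+* Polynomial ℝ)) * Polynomial.C (b m j)} with hS1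
  set S2 := {k : ℕ | ∃ (c r : Fin k → ℝ → ℝ → ℝ),
      ∀ s x t y : ℝ,
        (∑ i ∈ Finset.range (Ny + 1), ∑ j ∈ Finset.range (Nx + 1),
            Polynomial.eval s (Polynomial.eval (Polynomial.C t) (ℓ i j)) * y ^ i * x ^ j) =
          ∑ m : Fin k, c m t y * r m s x} with hS2
  have hsub : S1 ⊆ S2 := by
    rintro k ⟨a, b, hab⟩
    exact split_to_fun Ny Nx k ℓ a b hab
  have hd1 : d ∈ S1 := hd
  have hd2 : d ∈ S2 := hsub hd1
  apply le_antisymm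
  · exact le_trans (Nat.sInf_le hd1) (hdle _ (Nat.sInf_mem ⟨d, hd2⟩))
  · exact Nat.sInf_le (hsub (Nat.sInf_mem ⟨d, hd1⟩))
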